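/- arXiv:2512.20452 — 2 statements merged into one kernel-verified Lean document; each statement's English description precedes it below -/
import Mathlib

section
/- If X ∼ P_X is centrally symmetric about μ ∈ H (i.e., X − μ has the same distribution as μ − X), then the regularized projection depth is centrally symmetric about μ: D_β(x; P_X) = D_β(2μ − x; P_X) for all x ∈ H. Moreover D_β attains its maximum value 1 at μ. -/
open MeasureTheory Filter
open scoped RealInnerProductSpace ENNReal

noncomputable section

/-- The set of medians of a real random variable `Z`. -/
def medianSet {Ω : Type*} [MeasureSpace Ω] (Z : Ω → ℝ) : Set ℝ :=
  {m : ℝ | volume {ω | Z ω ≤ m} ≥ 1/2 ∧ volume {ω | m ≤ Z ω} ≥ 1/2}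

/-- The median (midpoint-of-medians convention) of a real random variable. -/
def med {Ω : Type*} [MeasureSpace Ω] (Z : Ω → ℝ) : ℝ :=
  (sInf (medianSet Z) + sSup (medianSet Z)) / 2

/-- The median absolute deviation of a real random variable. -/
def mad {Ω : Type*} [MeasureSpace Ω] (Z : Ω → ℝ) : ℝ :=
  med (fun ω => |Z ω - med Z|)

/-- The regularized direction set `V_β`. -/
def dirSet {Ω : Type*} [MeasureSpace Ω] {H : Type*} [NormedAddCommGroup H]
    [InnerProductSpace ℝ H] (X : Ω → H) (β : ℝ) : Set H :=
  {v : H | ‖v‖ = 1 ∧ β ≤ mad (fun ω => ⟪X ω, v⟫)}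

/-- The projection outlyingness `O_v(x; P_X)`. -/
def outl {Ω : Type*} [MeasureSpace Ω] {H : Type*} [NormedAddCommGroup H]
    [InnerProductSpace ℝ H] (X : Ω → H) (v x : H) : ℝ :=
  |⟪x, v⟫ - med (fun ω => ⟪X ω, v⟫)| / mad (fun ω => ⟪X ω, v⟫)

/-- The regularized projection depth `D_β(x; P_X)`. -/
def RPD {Ω : Type*} [MeasureSpace Ω] {H : Type*} [NormedAddCommGroup H]
    [InnerProductSpace ℝ H] (X : Ω → H) (β : ℝ) (x : H) : ℝ :=
  ⨅ v : dirSet X β, (1 + outl X v x)⁻¹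

end

section aux

variable {Ω : Type*} [MeasureSpace Ω] [IsProbabilityMeasure (volume : Measure Ω)]
  {Z : Ω → ℝ}

/-- For small `a`, the left tail has measure `< 1/2`. -/
lemma exists_left_tail_small (hZ : Measurable Z) :
    ∃ a : ℝ, volume {ω | Z ω ≤ a} < 1/2 := by
  have hmeas : ∀ c : ℝ, NullMeasurableSet {ω | Z ω ≤ c} (volume : Measure Ω) :=
    fun c => (hZ measurableSet_Iic).nullMeasurableSet
  have hanti : Antitone (fun n : ℕ => {ω | Z ω ≤ -(n:ℝ)}) := by
    intro n m hnm ω hω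
    simp only [Set.mem_setOf_eq] at hω ⊢
    have : (n:ℝ) ≤ (m:ℝ) := by exact_mod_cast hnm
    linarith
  have hinter : (⋂ n : ℕ, {ω | Z ω ≤ -(n:ℝ)}) = (∅ : Set Ω) := by
    ext ω
    simp only [Set.mem_iInter, Set.mem_setOf_eq, Set.mem_empty_iff_false, iff_false, not_forall,
      not_le]
    obtain ⟨n, hn⟩ := exists_nat_gt (-(Z ω))
    exact ⟨n, by linarith⟩
  have htend := tendsto_measure_iInter_atTop (μ := (volume : Measure Ω))
    (fun n : ℕ => hmeas _) hanti ⟨0, measure_ne_top _ _⟩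
  rw [hinter, measure_empty] at htend
  have := (htend.eventually (eventually_lt_nhds (by norm_num : (0:ℝ≥0∞) < 1/2))).exists
  obtain ⟨n, hn⟩ := this
  exact ⟨-(n:ℝ), hn⟩

/-- For large `a`, the right tail has measure `< 1/2`. -/
lemma exists_right_tail_small (hZ : Measurable Z) :
    ∃ a : ℝ, volume {ω | a ≤ Z ω} < 1/2 := by
  have hmeas : ∀ c : ℝ, NullMeasurableSet {ω | c ≤ Z ω} (volume : Measure Ω) :=
    fun c => (hZ measurableSet_Ici).nullMeasurableSet
  have hanti : Antitone (fun n : ℕ => {ω | (n:ℝ) ≤ Z ω}) := by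
    intro n m hnm ω hω
    simp only [Set.mem_setOf_eq] at hω ⊢
    have : (n:ℝ) ≤ (m:ℝ) := by exact_mod_cast hnm
    linarith
  have hinter : (⋂ n : ℕ, {ω | (n:ℝ) ≤ Z ω}) = (∅ : Set Ω) := by
    ext ω
    simp only [Set.mem_iInter, Set.mem_setOf_eq, Set.mem_empty_iff_false, iff_false, not_forall,
      not_le]
    obtain ⟨n, hn⟩ := exists_nat_gt (Z ω)
    exact ⟨n, hn⟩
  have htend := tendsto_measure_iInter_atTop (μ := (volume : Measure Ω))
    (fun n : ℕ => hmeas _) hanti ⟨0, measure_ne_top _ _⟩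
  rw [hinter, measure_empty] at htend
  obtain ⟨n, hn⟩ := (htend.eventually (eventually_lt_nhds (by norm_num : (0:ℝ≥0∞) < 1/2))).exists
  exact ⟨(n:ℝ), hn⟩

lemma exists_cdf_ge (hZ : Measurable Z) :
    ∃ a : ℝ, 1/2 ≤ volume {ω | Z ω ≤ a} := by
  have hmono : Monotone (fun n : ℕ => {ω | Z ω ≤ (n:ℝ)}) := by
    intro n m hnm ω hω
    simp only [Set.mem_setOf_eq] at hω ⊢
    have : (n:ℝ) ≤ (m:ℝ) := by exact_mod_cast hnm
    linarith
  have hunion : (⋃ n : ℕ, {ω | Z ω ≤ (n:ℝ)}) = (Set.univ : Set Ω) := by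
    ext ω
    simp only [Set.mem_iUnion, Set.mem_setOf_eq, Set.mem_univ, iff_true]
    obtain ⟨n, hn⟩ := exists_nat_gt (Z ω)
    exact ⟨n, hn.le⟩
  have htend := tendsto_measure_iUnion_atTop (μ := (volume : Measure Ω)) hmono
  rw [hunion, measure_univ] at htend
  obtain ⟨n, hn⟩ := (htend.eventually (eventually_gt_nhds (by norm_num : (1/2:ℝ≥0∞) < 1))).exists
  exact ⟨(n:ℝ), hn.le⟩

lemma medianSet_nonempty (hZ : Measurable Z) : (medianSet Z).Nonempty := by
  obtain ⟨a₀, ha₀⟩ := exists_cdf_ge hZ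
  obtain ⟨b₀, hb₀⟩ := exists_left_tail_small hZ
  set S : Set ℝ := {t : ℝ | 1/2 ≤ volume {ω | Z ω ≤ t}} with hS
  have hSne : S.Nonempty := ⟨a₀, ha₀⟩
  have hFmono : ∀ s t : ℝ, s ≤ t → volume {ω | Z ω ≤ s} ≤ volume {ω | Z ω ≤ t} :=
    fun s t hst => measure_mono (fun ω hω => le_trans hω hst)
  have hSbdd : BddBelow S := by
    refine ⟨b₀, fun s hs => ?_⟩
    by_contra hb
    push_neg at hb
    exact absurd (le_trans hs (hFmono _ _ hb.le)) (not_le.mpr hb₀)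
  set m := sInf S with hm
  refine ⟨m, ?_, ?_⟩
  · -- 1/2 ≤ volume {Z ≤ m}
    have hset : {ω | Z ω ≤ m} = ⋂ n : ℕ, {ω | Z ω ≤ m + 1/(n+1)} := by
      ext ω
      simp only [Set.mem_iInter, Set.mem_setOf_eq]
      constructor
      · intro h n
        have : (0:ℝ) < 1/(n+1) := by positivity
        linarith
      · intro h
        by_contra hlt
        push_neg at hlt
        obtain ⟨n, hn⟩ := exists_nat_one_div_lt (by linarith : (0:ℝ) < Z ω - m)
        have := h n
        linarith
    have hanti : Antitone (fun n : ℕ => {ω | Z ω ≤ m + 1/((n:ℝ)+1)}) := by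
      intro n k hnk ω hω
      simp only [Set.mem_setOf_eq] at hω ⊢
      have h1 : (1:ℝ)/((k:ℝ)+1) ≤ 1/((n:ℝ)+1) := by
        apply one_div_le_one_div_of_le (by positivity)
        have : (n:ℝ) ≤ (k:ℝ) := by exact_mod_cast hnk
        linarith
      linarith
    have htend := tendsto_measure_iInter_atTop (μ := (volume : Measure Ω))
      (s := fun n : ℕ => {ω | Z ω ≤ m + 1/((n:ℝ)+1)})
      (fun n : ℕ => (measurableSet_le hZ measurable_const).nullMeasurableSet)
      hanti ⟨0, measure_ne_top _ _⟩
    rw [← hset] at htend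
    refine ge_of_tendsto htend (Eventually.of_forall fun n => ?_)
    have hlt : m < m + 1/((n:ℝ)+1) := by
      have h0 : (0:ℝ) < 1/((n:ℝ)+1) := by positivity
      linarith
    obtain ⟨s, hsS, hslt⟩ := exists_lt_of_csInf_lt hSne hlt
    exact le_trans hsS (hFmono _ _ hslt.le)
  · -- 1/2 ≤ volume {m ≤ Z}
    have hcompl : {ω | m ≤ Z ω} = {ω | Z ω < m}ᶜ := by
      ext ω; simp [not_lt]
    have hlt_meas : volume {ω | Z ω < m} ≤ 1/2 := by
      have hset : {ω | Z ω < m} = ⋃ n : ℕ, {ω | Z ω ≤ m - 1/(n+1)} := by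
        ext ω
        simp only [Set.mem_iUnion, Set.mem_setOf_eq]
        constructor
        · intro h
          obtain ⟨n, hn⟩ := exists_nat_one_div_lt (by linarith : (0:ℝ) < m - Z ω)
          exact ⟨n, by linarith⟩
        · rintro ⟨n, hn⟩
          have : (0:ℝ) < 1/((n:ℝ)+1) := by positivity
          linarith
      have hmono : Monotone (fun n : ℕ => {ω | Z ω ≤ m - 1/((n:ℝ)+1)}) := by
        intro n k hnk ω hω
        simp only [Set.mem_setOf_eq] at hω ⊢
        have h1 : (1:ℝ)/((k:ℝ)+1) ≤ 1/((n:ℝ)+1) := by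
          apply one_div_le_one_div_of_le (by positivity)
          have : (n:ℝ) ≤ (k:ℝ) := by exact_mod_cast hnk
          linarith
        linarith
      have htend := tendsto_measure_iUnion_atTop (μ := (volume : Measure Ω))
        (s := fun n : ℕ => {ω | Z ω ≤ m - 1/((n:ℝ)+1)}) hmono
      rw [← hset] at htend
      refine le_of_tendsto htend (Eventually.of_forall fun n => ?_)
      have hnotS : (m - 1/((n:ℝ)+1)) ∉ S := by
        intro hmem
        have := csInf_le hSbdd hmem
        have hpos : (0:ℝ) < 1/((n:ℝ)+1) := by positivity
        rw [← hm] at this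
        linarith
      exact (not_le.mp hnotS).le
    rw [hcompl, prob_compl_eq_one_sub (measurableSet_lt hZ measurable_const)]
    calc (1/2 : ℝ≥0∞) = 1 - 1/2 := by
          rw [ENNReal.sub_half ENNReal.one_ne_top]
      _ ≤ 1 - volume {ω | Z ω < m} := tsub_le_tsub_left hlt_meas 1

lemma medianSet_bddBelow (hZ : Measurable Z) : BddBelow (medianSet Z) := by
  obtain ⟨b₀, hb₀⟩ := exists_left_tail_small hZ
  refine ⟨b₀, fun s hs => ?_⟩
  by_contra hb
  push_neg at hb
  have : volume {ω | Z ω ≤ s} ≤ volume {ω | Z ω ≤ b₀} :=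
    measure_mono (fun ω hω => le_trans hω hb.le)
  exact absurd (le_trans hs.1 this) (not_le.mpr hb₀)

lemma medianSet_bddAbove (hZ : Measurable Z) : BddAbove (medianSet Z) := by
  obtain ⟨b₀, hb₀⟩ := exists_right_tail_small hZ
  refine ⟨b₀, fun s hs => ?_⟩
  by_contra hb
  push_neg at hb
  have : volume {ω | s ≤ Z ω} ≤ volume {ω | b₀ ≤ Z ω} :=
    measure_mono (fun ω hω => le_trans hb.le hω)
  exact absurd (le_trans hs.2 this) (not_le.mpr hb₀)

/-- If the median set is symmetric about `c`, then `med Z = c`. -/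
lemma med_eq_of_symm (hZ : Measurable Z) (c : ℝ)
    (hsymm : ∀ m ∈ medianSet Z, 2*c - m ∈ medianSet Z) : med Z = c := by
  have hne := medianSet_nonempty hZ
  have hbb := medianSet_bddBelow hZ
  have hba := medianSet_bddAbove hZ
  have h1 : sSup (medianSet Z) ≤ 2*c - sInf (medianSet Z) := by
    refine csSup_le hne fun m hm => ?_
    have := csInf_le hbb (hsymm m hm)
    linarith
  have h2 : 2*c - sSup (medianSet Z) ≤ sInf (medianSet Z) := by
    refine le_csInf hne fun m hm => ?_
    have := le_csSup hba (hsymm m hm)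
    linarith
  unfold med
  linarith

end aux

section symm

variable {Ω : Type*} [MeasureSpace Ω] [IsProbabilityMeasure (volume : Measure Ω)]
  {H : Type*} [NormedAddCommGroup H] [InnerProductSpace ℝ H]
  [MeasurableSpace H] [BorelSpace H]

/-- Under central symmetry about `μ`, every projection has median `⟪μ, v⟫`. -/
lemma med_inner_eq (X : Ω → H) (hX : Measurable X) (μ : H)
    (hsym : Measure.map (fun ω => X ω - μ) volume = Measure.map (fun ω => μ - X ω) volume)
    (v : H) : med (fun ω => ⟪X ω, v⟫) = ⟪μ, v⟫ := by
  set Z : Ω → ℝ := fun ω => ⟪X ω, v⟫ with hZdef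
  set c : ℝ := ⟪μ, v⟫ with hcdef
  have hg : Continuous (fun y : H => ⟪y, v⟫) := continuous_id.inner continuous_const
  have hZ : Measurable Z := (hg.measurable).comp hX
  have hmap : Measure.map (fun ω => Z ω - c) volume = Measure.map (fun ω => c - Z ω) volume := by
    have h1 : (fun ω => Z ω - c) = (fun y : H => ⟪y, v⟫) ∘ (fun ω => X ω - μ) := by
      funext ω; simp [Z, c, inner_sub_left]
    have h2 : (fun ω => c - Z ω) = (fun y : H => ⟪y, v⟫) ∘ (fun ω => μ - X ω) := by
      funext ω; simp [Z, c, inner_sub_left]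
    have hm1 : Measurable (fun ω => X ω - μ) :=
      ((continuous_id.sub continuous_const).measurable).comp hX
    have hm2 : Measurable (fun ω => μ - X ω) :=
      ((continuous_const.sub continuous_id).measurable).comp hX
    rw [h1, h2, ← Measure.map_map hg.measurable hm1,
      ← Measure.map_map hg.measurable hm2, hsym]
  have hcdf : ∀ t : ℝ, volume {ω | Z ω - c ≤ t} = volume {ω | c - Z ω ≤ t} := by
    intro t
    have e1 : volume {ω | Z ω - c ≤ t}
        = Measure.map (fun ω => Z ω - c) volume (Set.Iic t) := by
      rw [Measure.map_apply (show Measurable (fun ω => Z ω - c) from hZ.sub measurable_const) measurableSet_Iic]; rfl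
    have e2 : volume {ω | c - Z ω ≤ t}
        = Measure.map (fun ω => c - Z ω) volume (Set.Iic t) := by
      rw [Measure.map_apply (show Measurable (fun ω => c - Z ω) from measurable_const.sub hZ) measurableSet_Iic]; rfl
    rw [e1, e2, hmap]
  have hsymm : ∀ m ∈ medianSet Z, 2*c - m ∈ medianSet Z := by
    rintro m ⟨h1, h2⟩
    constructor
    · have e1 : {ω | Z ω ≤ 2*c - m} = {ω | Z ω - c ≤ c - m} := by
        ext ω; simp only [Set.mem_setOf_eq]; constructor <;> intro h <;> linarith
      have e2 : {ω | c - Z ω ≤ c - m} = {ω | m ≤ Z ω} := by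
        ext ω; simp only [Set.mem_setOf_eq]; constructor <;> intro h <;> linarith
      calc (1/2 : ℝ≥0∞) ≤ volume {ω | m ≤ Z ω} := h2
        _ = volume {ω | Z ω ≤ 2*c - m} := by rw [e1, hcdf (c - m), e2]
    · have e1 : {ω | 2*c - m ≤ Z ω} = {ω | c - Z ω ≤ m - c} := by
        ext ω; simp only [Set.mem_setOf_eq]; constructor <;> intro h <;> linarith
      have e2 : {ω | Z ω - c ≤ m - c} = {ω | Z ω ≤ m} := by
        ext ω; simp only [Set.mem_setOf_eq]; constructor <;> intro h <;> linarith
      calc (1/2 : ℝ≥0∞) ≤ volume {ω | Z ω ≤ m} := h1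
        _ = volume {ω | 2*c - m ≤ Z ω} := by rw [e1, ← hcdf (m - c), e2]
  exact med_eq_of_symm hZ c hsymm

end symm

/-- If `X` is centrally symmetric about `μ` (i.e. `X - μ ≐ μ - X`), then
`D_β(x;P_X) = D_β(2μ - x;P_X)` for all `x`, and `D_β` attains its maximal value `1` at `μ`. -/
theorem rpd_centrally_symmetric
    {Ω : Type*} [MeasureSpace Ω] [IsProbabilityMeasure (volume : Measure Ω)]
    {H : Type*} [NormedAddCommGroup H] [InnerProductSpace ℝ H]
    [MeasurableSpace H] [BorelSpace H]
    (X : Ω → H) (hX : Measurable X) (μ : H)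
    (hsym : Measure.map (fun ω => X ω - μ) volume = Measure.map (fun ω => μ - X ω) volume)
    (β : ℝ) (hβ : 0 ≤ β) (hne : (dirSet X β).Nonempty) :
    (∀ x : H, RPD X β x = RPD X β ((2 : ℝ) • μ - x)) ∧
      RPD X β μ = 1 ∧ ∀ x : H, RPD X β x ≤ 1 := by
  haveI hnty : Nonempty (dirSet X β) := hne.to_subtype
  have key : ∀ v : H, med (fun ω => ⟪X ω, v⟫) = ⟪μ, v⟫ :=
    med_inner_eq X hX μ hsym
  have houtl_nonneg : ∀ (v : dirSet X β) (x : H), 0 ≤ outl X (↑v) x := by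
    intro v x
    exact div_nonneg (abs_nonneg _) (le_trans hβ v.2.2)
  have hbdd : ∀ x : H, BddBelow (Set.range fun v : dirSet X β => (1 + outl X (↑v) x)⁻¹) := by
    intro x
    refine ⟨0, ?_⟩
    rintro y ⟨v, rfl⟩
    exact inv_nonneg.mpr (by linarith [houtl_nonneg v x])
  refine ⟨fun x => ?_, ?_, fun x => ?_⟩
  · unfold RPD
    refine iInf_congr fun v => ?_
    congr 1
    unfold outl
    congr 1
    rw [key]
    have h : ⟪(2:ℝ) • μ - x, (v:H)⟫ - ⟪μ, (v:H)⟫ = -(⟪x, (v:H)⟫ - ⟪μ, (v:H)⟫) := by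
      rw [inner_sub_left, real_inner_smul_left]; ring
    rw [h, abs_neg]
  · unfold RPD
    have h : ∀ v : dirSet X β, (1 + outl X (↑v) μ)⁻¹ = 1 := by
      intro v
      have : outl X (↑v) μ = 0 := by
        unfold outl
        rw [key, sub_self, abs_zero, zero_div]
      rw [this, add_zero, inv_one]
    calc (⨅ v : dirSet X β, (1 + outl X (↑v) μ)⁻¹)
        = ⨅ _ : dirSet X β, (1:ℝ) := iInf_congr h
      _ = 1 := ciInf_const
  · obtain ⟨v₀, hv₀⟩ := hne
    unfold RPD
    exact ciInf_le_of_le (hbdd x) ⟨v₀, hv₀⟩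
      (inv_le_one_of_one_le₀ (by linarith [houtl_nonneg ⟨v₀, hv₀⟩ x]))
end

section
/- If β > 0 and V_β ≠ ∅, then the regularized projection depth D_β(·; P_X) is (1/β)-Lipschitz continuous on H: |D_β(x;P_X) − D_β(y;P_X)| ≤ (1/β)‖x − y‖ for all x, y ∈ H. Consequently every upper level set {x : D_β(x;P_X) ≥ τ} is closed. -/
open MeasureTheory Filter
open scoped RealInnerProductSpace ENNReal

/-- `t ↦ (1+t)⁻¹` is 1-Lipschitz on `[0,∞)`. -/
lemma inv_one_add_lipschitz {a b : ℝ} (ha : 0 ≤ a) (hb : 0 ≤ b) :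
    |(1 + a)⁻¹ - (1 + b)⁻¹| ≤ |a - b| := by
  have h1 : (0:ℝ) < 1 + a := by linarith
  have h2 : (0:ℝ) < 1 + b := by linarith
  have h3 : (1 + a)⁻¹ - (1 + b)⁻¹ = (b - a) * ((1 + a)⁻¹ * (1 + b)⁻¹) := by
    field_simp
    ring
  rw [h3, abs_mul, abs_of_pos (show (0:ℝ) < (1 + a)⁻¹ * (1 + b)⁻¹ by positivity)]
  calc |b - a| * ((1 + a)⁻¹ * (1 + b)⁻¹) ≤ |b - a| * 1 := by
        apply mul_le_mul_of_nonneg_left _ (abs_nonneg _)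
        calc (1 + a)⁻¹ * (1 + b)⁻¹ ≤ 1 * 1 := by
              apply mul_le_mul (inv_le_one_of_one_le₀ (by linarith)) (inv_le_one_of_one_le₀ (by linarith))
                (by positivity) (by norm_num)
          _ = 1 := by norm_num
    _ = |a - b| := by rw [mul_one, abs_sub_comm]

/-- If `β > 0` and `V_β ≠ ∅`, then `D_β(·;P_X)` is `(1/β)`-Lipschitz on `H`, and consequently
every upper level set `{x : D_β(x;P_X) ≥ τ}` is closed. -/
theorem rpd_lipschitz
    {Ω : Type*} [MeasureSpace Ω] [IsProbabilityMeasure (volume : Measure Ω)]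
    {H : Type*} [NormedAddCommGroup H] [InnerProductSpace ℝ H]
    (X : Ω → H) (β : ℝ) (hβ : 0 < β) (hne : (dirSet X β).Nonempty) :
    (∀ x y : H, |RPD X β x - RPD X β y| ≤ (1 / β) * ‖x - y‖) ∧
      ∀ τ : ℝ, IsClosed {x : H | τ ≤ RPD X β x} := by
  have hNE : Nonempty (dirSet X β) := hne.to_subtype
  have hmad : ∀ v : dirSet X β, 0 < mad (fun ω => ⟪X ω, (v : H)⟫) := fun v =>
    lt_of_lt_of_le hβ v.2.2
  have houtl : ∀ (v : dirSet X β) (x : H), 0 ≤ outl X v x := fun v x =>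
    div_nonneg (abs_nonneg _) (hmad v).le
  -- outl is (1/β)-Lipschitz in x
  have houtl_lip : ∀ (v : dirSet X β) (x y : H),
      |outl X v x - outl X v y| ≤ (1 / β) * ‖x - y‖ := by
    intro v x y
    have hm := hmad v
    have h1 : outl X v x - outl X v y
        = (|⟪x, (v : H)⟫ - med (fun ω => ⟪X ω, (v : H)⟫)|
          - |⟪y, (v : H)⟫ - med (fun ω => ⟪X ω, (v : H)⟫)|) / mad (fun ω => ⟪X ω, (v : H)⟫) := by
      unfold outl; ring
    rw [h1, abs_div, abs_of_pos hm]
    have h2 : |(|⟪x, (v : H)⟫ - med (fun ω => ⟪X ω, (v : H)⟫)|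
          - |⟪y, (v : H)⟫ - med (fun ω => ⟪X ω, (v : H)⟫)|)| ≤ ‖x - y‖ := by
      refine le_trans (abs_abs_sub_abs_le_abs_sub _ _) ?_
      have h3 : ⟪x, (v : H)⟫ - med (fun ω => ⟪X ω, (v : H)⟫)
          - (⟪y, (v : H)⟫ - med (fun ω => ⟪X ω, (v : H)⟫)) = ⟪x - y, (v : H)⟫ := by
        rw [inner_sub_left]; ring
      rw [h3]
      calc |⟪x - y, (v : H)⟫| ≤ ‖x - y‖ * ‖(v : H)‖ := abs_real_inner_le_norm _ _
        _ = ‖x - y‖ := by rw [v.2.1, mul_one]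
    calc _ ≤ ‖x - y‖ / β := div_le_div₀ (norm_nonneg _) h2 hβ v.2.2
      _ = (1 / β) * ‖x - y‖ := by ring
  -- pointwise Lipschitz bound for the integrand
  have hf_lip : ∀ (v : dirSet X β) (x y : H),
      (1 + outl X v x)⁻¹ ≤ (1 + outl X v y)⁻¹ + (1 / β) * ‖x - y‖ := by
    intro v x y
    have := (abs_le.mp (le_trans (inv_one_add_lipschitz (houtl v x) (houtl v y))
      (houtl_lip v x y))).2
    linarith [abs_le.mp ((inv_one_add_lipschitz (houtl v x) (houtl v y)).trans
      (houtl_lip v x y))]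
  have hbdd : ∀ x : H, BddBelow (Set.range fun v : dirSet X β => (1 + outl X v x)⁻¹) := by
    intro x
    exact ⟨0, by rintro _ ⟨v, rfl⟩; exact inv_nonneg.mpr (by linarith [houtl v x])⟩
  -- one-sided estimate
  have hone : ∀ x y : H, RPD X β x ≤ RPD X β y + (1 / β) * ‖x - y‖ := by
    intro x y
    have : RPD X β x - (1 / β) * ‖x - y‖ ≤ RPD X β y := by
      apply le_ciInf
      intro v
      have h1 : RPD X β x ≤ (1 + outl X v x)⁻¹ := ciInf_le (hbdd x) v
      have h2 := hf_lip v x y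
      linarith
    linarith
  have hlip : ∀ x y : H, |RPD X β x - RPD X β y| ≤ (1 / β) * ‖x - y‖ := by
    intro x y
    rw [abs_sub_le_iff]
    constructor
    · linarith [hone x y]
    · have := hone y x
      rw [norm_sub_rev] at this
      linarith
  refine ⟨hlip, ?_⟩
  intro τ
  have hcont : Continuous (RPD X β) := by
    have : LipschitzWith (Real.toNNReal (1 / β)) (RPD X β) := by
      apply LipschitzWith.of_dist_le_mul
      intro x y
      rw [Real.dist_eq, dist_eq_norm]
      calc |RPD X β x - RPD X β y| ≤ (1 / β) * ‖x - y‖ := hlip x y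
        _ = (Real.toNNReal (1 / β) : ℝ) * ‖x - y‖ := by
            rw [Real.coe_toNNReal _ (by positivity)]
    exact this.continuous
  have : {x : H | τ ≤ RPD X β x} = RPD X β ⁻¹' Set.Ici τ := rfl
  rw [this]
  exact IsClosed.preimage hcont isClosed_Ici
end
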